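/- Let L v(x) = (1/2)σ² x² v''(x) + b x v'(x) with σ > 0, b < a₁, a₁ > 0. Suppose v : (0,∞) → ℝ is twice continuously differentiable, satisfies -L v(x) + a₁ v(x) ≤ 0 for all x ∈ (0,∞), and has at most linear growth: |v(x)| ≤ C(1 + x). Then v(x) ≤ 0 for all x ∈ (0,∞). -/

import Mathlib

open Set Filter Topology

lemma deriv2_nonpos_of_isLocalMax {f : ℝ → ℝ} {c : ℝ}
    (hmax : IsLocalMax f c)
    (hd : ∀ᶠ x in 𝓝 c, DifferentiableAt ℝ f x)
    (hd2 : DifferentiableAt ℝ (deriv f) c) :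
    deriv (deriv f) c ≤ 0 := by
  by_contra h
  push_neg at h
  have hdc0 : deriv f c = 0 := hmax.deriv_eq_zero
  have hda : HasDerivAt (deriv f) (deriv (deriv f) c) c := hd2.hasDerivAt
  have hslope : Tendsto (fun x => (deriv f x - deriv f c) / (x - c)) (𝓝[≠] c)
      (𝓝 (deriv (deriv f) c)) := by
    have := hda.hasDerivWithinAt (s := {c}ᶜ)
    rw [hasDerivWithinAt_iff_tendsto_slope] at this
    rw [Set.diff_singleton_eq_self (by simp)] at this
    exact this.congr (fun x => slope_def_field _ _ _)
  have h2 : ∀ᶠ x in 𝓝[>] c, 0 < deriv f x := by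
    have hev : ∀ᶠ x in 𝓝[≠] c, 0 < (deriv f x - deriv f c) / (x - c) :=
      hslope.eventually (eventually_gt_nhds h)
    have hsub : 𝓝[>] c ≤ 𝓝[≠] c :=
      nhdsWithin_mono c (fun x hx => ne_of_gt hx)
    filter_upwards [hev.filter_mono hsub, self_mem_nhdsWithin] with x hx hx'
    rw [hdc0, sub_zero] at hx
    have hxc : 0 < x - c := sub_pos.mpr hx'
    have := mul_pos hx hxc
    rwa [div_mul_cancel₀ _ (ne_of_gt hxc)] at this
  obtain ⟨δ, hδ, hball⟩ := Metric.eventually_nhds_iff.mp (hd.and hmax)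
  obtain ⟨u, hu, hIoo⟩ := mem_nhdsGT_iff_exists_Ioo_subset.mp h2
  set t : ℝ := min u (c + δ) with ht
  have hct : c < t := lt_min hu (by linarith)
  set m : ℝ := (c + t) / 2 with hm
  have hcm : c < m := by simp [hm]; linarith
  have hmt : m < t := by simp [hm]; linarith
  have hIcc_ball : ∀ x ∈ Icc c m, dist x c < δ := by
    intro x hx
    rw [Real.dist_eq, abs_of_nonneg (by linarith [hx.1])]
    have : t ≤ c + δ := min_le_right _ _
    linarith [hx.2]
  have hmono : StrictMonoOn f (Icc c m) := by
    apply strictMonoOn_of_deriv_pos (convex_Icc c m)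
    · intro x hx
      exact ((hball (hIcc_ball x hx)).1.continuousAt).continuousWithinAt
    · intro x hx
      rw [interior_Icc] at hx
      refine hIoo ⟨hx.1, ?_⟩
      exact lt_of_lt_of_le (lt_of_lt_of_le hx.2 hmt.le) (min_le_left _ _)
  have h1 : f c < f m := hmono (left_mem_Icc.mpr hcm.le) (right_mem_Icc.mpr hcm.le) hcm
  have h2' : f m ≤ f c := (hball (hIcc_ball m (right_mem_Icc.mpr hcm.le))).2
  linarith

set_option maxHeartbeats 1000000 in
theorem comparison_principle_subsolution
    (σ b a₁ : ℝ) (hσ : 0 < σ) (hba : b < a₁) (ha₁ : 0 < a₁)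
    (v : ℝ → ℝ) (hv : ContDiffOn ℝ 2 v (Ioi 0))
    (hsub : ∀ x ∈ Ioi (0 : ℝ),
      -((1 / 2) * σ ^ 2 * x ^ 2 * deriv (deriv v) x + b * x * deriv v x) + a₁ * v x ≤ 0)
    (C : ℝ) (hgrowth : ∀ x ∈ Ioi (0 : ℝ), |v x| ≤ C * (1 + x)) :
    ∀ x ∈ Ioi (0 : ℝ), v x ≤ 0 := by
  -- basic positivity facts
  have hC : 0 ≤ C := by
    have h1 := hgrowth 1 (by norm_num)
    nlinarith [abs_nonneg (v 1)]
  set K : ℝ := 1 + |b| + σ ^ 2 with hK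
  have hK1 : 1 ≤ K := by nlinarith [abs_nonneg b, sq_nonneg σ]
  have hK0 : 0 < K := by linarith
  -- exponents
  set q : ℝ := 1 + min 1 ((a₁ - b) / K) with hqdef
  set p : ℝ := min 1 (a₁ / K) with hpdef
  have hδ0 : 0 < min 1 ((a₁ - b) / K) := lt_min one_pos (div_pos (by linarith) hK0)
  have hq1 : 1 < q := by simp only [hqdef]; linarith
  have hδ1 : min 1 ((a₁ - b) / K) ≤ 1 := min_le_left _ _
  have hδK : min 1 ((a₁ - b) / K) * K ≤ a₁ - b := by
    have := mul_le_mul_of_nonneg_right (min_le_right 1 ((a₁ - b) / K)) hK0.le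
    rwa [div_mul_cancel₀ _ (ne_of_gt hK0)] at this
  have hp0 : 0 < p := lt_min one_pos (div_pos ha₁ hK0)
  have hp1 : p ≤ 1 := min_le_left _ _
  have hpK : p * K ≤ a₁ := by
    have := mul_le_mul_of_nonneg_right (min_le_right 1 (a₁ / K)) hK0.le
    rwa [div_mul_cancel₀ _ (ne_of_gt hK0)] at this
  -- supersolution coefficients are positive
  have hψq : 0 < a₁ - b * q - σ ^ 2 / 2 * (q * (q - 1)) := by
    set δ := min 1 ((a₁ - b) / K) with hδdef
    have hq' : q = 1 + δ := rfl
    rw [hq']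
    have hb1 : b ≤ |b| := le_abs_self b
    have hb2 : -b ≤ |b| := neg_le_abs b
    rw [hK] at hδK
    nlinarith [sq_nonneg σ, mul_nonneg (sq_nonneg σ) hδ0.le,
      mul_nonneg (mul_nonneg (sq_nonneg σ) hδ0.le) (by linarith : (0:ℝ) ≤ 1 - δ)]
  have hψp : 0 < a₁ + b * p - σ ^ 2 / 2 * (p * (p + 1)) := by
    have hb2 : -b ≤ |b| := neg_le_abs b
    rw [hK] at hpK
    nlinarith [sq_nonneg σ, mul_nonneg (sq_nonneg σ) hp0.le,
      mul_nonneg (mul_nonneg (sq_nonneg σ) hp0.le) (by linarith : (0:ℝ) ≤ 1 - p)]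
  clear_value q p
  clear hδ0 hδ1 hδK hpK hK
  -- the key estimate with the barrier
  have key : ∀ ε : ℝ, 0 < ε → ∀ x ∈ Ioi (0 : ℝ),
      v x ≤ ε * (x ^ q + x ^ (-p) + 1) := by
    intro ε hε x₀ hx₀
    rw [mem_Ioi] at hx₀
    set D : ℝ := 2 * C + 1 with hD
    have hD0 : 0 < D := by rw [hD]; linarith
    clear_value D
    set α : ℝ := min 1 (min (x₀ / 2) ((ε / D) ^ (1 / p))) with hα
    set β : ℝ := max 1 (max x₀ ((D / ε) ^ (1 / (q - 1)))) with hβ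
    have hα0 : 0 < α := by
      refine lt_min one_pos (lt_min (by linarith) ?_)
      exact Real.rpow_pos_of_pos (div_pos hε hD0) _
    have hαx : α ≤ x₀ := by
      have h : α ≤ x₀ / 2 := le_trans (min_le_right _ _) (min_le_left _ _)
      linarith
    have hα1 : α ≤ 1 := min_le_left _ _
    have hαle : α ≤ (ε / D) ^ (1 / p) := le_trans (min_le_right _ _) (min_le_right _ _)
    have hβx : x₀ ≤ β := le_trans (le_max_left _ _) (le_max_right _ _)
    have hβ1 : 1 ≤ β := le_max_left _ _
    have hβr : (D / ε) ^ (1 / (q - 1)) ≤ β := le_trans (le_max_right _ _) (le_max_right _ _)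
    have hβ0 : 0 < β := by linarith
    have hαβ : α ≤ β := le_trans hα1 hβ1
    clear_value α β
    -- the perturbed function
    set w : ℝ → ℝ := fun x => v x - ε * (x ^ q + x ^ (-p) + 1) with hw
    have hIcc_sub : Icc α β ⊆ Ioi (0 : ℝ) := fun x hx => lt_of_lt_of_le hα0 hx.1
    -- derivative facts for the barrier
    have hφd : ∀ x : ℝ, 0 < x →
        HasDerivAt (fun y : ℝ => y ^ q + y ^ (-p) + 1)
          (q * x ^ (q - 1) + -p * x ^ (-p - 1)) x := by
      intro x hx
      exact (((Real.hasDerivAt_rpow_const (Or.inl hx.ne')).add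
        (Real.hasDerivAt_rpow_const (p := -p) (Or.inl hx.ne'))).add_const 1)
    have hvd : ∀ x : ℝ, 0 < x → DifferentiableAt ℝ v x := fun x hx =>
      (hv.contDiffAt (isOpen_Ioi.mem_nhds hx)).differentiableAt two_ne_zero
    have hw' : ∀ x : ℝ, 0 < x →
        HasDerivAt w (deriv v x - ε * (q * x ^ (q - 1) + -p * x ^ (-p - 1))) x := by
      intro x hx
      exact (hvd x hx).hasDerivAt.sub ((hφd x hx).const_mul ε)
    -- continuity of w on the interval
    have hwc : ContinuousOn w (Icc α β) := by
      intro x hx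
      have hx0 : 0 < x := hIcc_sub hx
      exact ((hw' x hx0).differentiableAt.continuousAt).continuousWithinAt
    obtain ⟨c, hcmem, hcmax⟩ := isCompact_Icc.exists_isMaxOn (nonempty_Icc.mpr hαβ) hwc
    suffices hwc0 : w c ≤ 0 by
      have hmx : w x₀ ≤ w c := hcmax (mem_Icc.mpr ⟨hαx, hβx⟩)
      have h0 : v x₀ - ε * (x₀ ^ q + x₀ ^ (-p) + 1) ≤ 0 := by
        have e : w x₀ = v x₀ - ε * (x₀ ^ q + x₀ ^ (-p) + 1) := rfl
        linarith [e ▸ (le_trans hmx hwc0)]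
      linarith
    by_contra hpos
    push_neg at hpos
    -- endpoint estimates
    have hwα : w α ≤ 0 := by
      have hαp : α ^ p ≤ ε / D := by
        calc α ^ p ≤ ((ε / D) ^ (1 / p)) ^ p :=
              Real.rpow_le_rpow hα0.le hαle hp0.le
          _ = (ε / D) ^ (1 / p * p) := (Real.rpow_mul (by positivity) _ _).symm
          _ = ε / D := by rw [one_div_mul_cancel hp0.ne', Real.rpow_one]
      have hαppos : 0 < α ^ p := Real.rpow_pos_of_pos hα0 p
      have hεinv : D ≤ ε * α ^ (-p) := by
        rw [Real.rpow_neg hα0.le]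
        have h1 : (ε / D)⁻¹ ≤ (α ^ p)⁻¹ := inv_anti₀ hαppos hαp
        have h2 : ε * (ε / D)⁻¹ = D := by field_simp
        calc D = ε * (ε / D)⁻¹ := h2.symm
          _ ≤ ε * (α ^ p)⁻¹ := mul_le_mul_of_nonneg_left h1 hε.le
      have hvα : v α ≤ C * (1 + α) := le_trans (le_abs_self _) (hgrowth α hα0)
      have hαq : 0 < α ^ q := Real.rpow_pos_of_pos hα0 q
      have hvα' : C * (1 + α) ≤ 2 * C := by
        linarith [mul_nonneg hC (by linarith : (0:ℝ) ≤ 1 - α)]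
      have e : w α = v α - (ε * α ^ q + ε * α ^ (-p) + ε) := by
        simp only [hw]; ring
      rw [e]
      linarith [mul_pos hε hαq, mul_le_mul_of_nonneg_left (le_refl (α ^ (-p))) hε.le]
    have hwβ : w β ≤ 0 := by
      have hq1' : 0 < q - 1 := by linarith
      have hβq1 : D / ε ≤ β ^ (q - 1) := by
        calc D / ε = (D / ε) ^ (1 / (q - 1) * (q - 1)) := by
              rw [one_div_mul_cancel hq1'.ne', Real.rpow_one]
          _ = ((D / ε) ^ (1 / (q - 1))) ^ (q - 1) := by
              rw [← Real.rpow_mul (by positivity)]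
          _ ≤ β ^ (q - 1) :=
              Real.rpow_le_rpow (by positivity) hβr hq1'.le
      have hβsplit : β ^ q = β ^ (q - 1) * β := by
        rw [← Real.rpow_add_one hβ0.ne' (q - 1)]
        congr 1
        ring
      have h1 : D * β ≤ ε * β ^ q := by
        rw [hβsplit]
        have : D / ε * β ≤ β ^ (q - 1) * β := mul_le_mul_of_nonneg_right hβq1 hβ0.le
        calc D * β = ε * (D / ε * β) := by
              field_simp
          _ ≤ ε * (β ^ (q - 1) * β) := mul_le_mul_of_nonneg_left this hε.le
      have hvβ : v β ≤ C * (1 + β) := le_trans (le_abs_self _) (hgrowth β hβ0)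
      have hβp : 0 < β ^ (-p) := Real.rpow_pos_of_pos hβ0 _
      have hvβ' : C * (1 + β) ≤ 2 * C * β := by
        linarith [mul_nonneg hC (by linarith : (0:ℝ) ≤ β - 1)]
      have e : w β = v β - (ε * β ^ q + ε * β ^ (-p) + ε) := by
        simp only [hw]; ring
      rw [hD] at h1
      rw [e]
      linarith [mul_pos hε hβp]
    -- the maximum is interior
    have hcα : α < c := by
      rcases lt_or_eq_of_le hcmem.1 with h | h
      · exact h
      · exfalso; rw [h] at hwα; linarith
    have hcβ : c < β := by
      rcases lt_or_eq_of_le hcmem.2 with h | h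
      · exact h
      · exfalso; rw [h] at hpos; linarith
    have hc0 : 0 < c := lt_trans hα0 hcα
    have hlocmax : IsLocalMax w c := hcmax.isLocalMax (Icc_mem_nhds hcα hcβ)
    -- first and second derivative at c
    have hIoi_nhds : Ioi (0 : ℝ) ∈ 𝓝 c := isOpen_Ioi.mem_nhds hc0
    have hwd1 : deriv w c = deriv v c - ε * (q * c ^ (q - 1) + -p * c ^ (-p - 1)) :=
      (hw' c hc0).deriv
    have hderiv0 : deriv w c = 0 := hlocmax.deriv_eq_zero
    -- deriv v is differentiable at c
    have hv1 : ContDiffOn ℝ 1 (deriv v) (Ioi 0) :=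
      hv.deriv_of_isOpen isOpen_Ioi (by norm_num)
    have hdvd : DifferentiableAt ℝ (deriv v) c :=
      (hv1.contDiffAt (isOpen_Ioi.mem_nhds hc0)).differentiableAt one_ne_zero
    -- second derivative of the barrier
    have hφ'd : HasDerivAt (fun x : ℝ => q * x ^ (q - 1) + -p * x ^ (-p - 1))
        (q * ((q - 1) * c ^ (q - 1 - 1)) + -p * ((-p - 1) * c ^ (-p - 1 - 1))) c := by
      exact ((Real.hasDerivAt_rpow_const (p := q - 1) (Or.inl hc0.ne')).const_mul q).add
        (((Real.hasDerivAt_rpow_const (p := -p - 1) (Or.inl hc0.ne'))).const_mul (-p))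
    have hgd : HasDerivAt (fun x => deriv v x - ε * (q * x ^ (q - 1) + -p * x ^ (-p - 1)))
        (deriv (deriv v) c -
          ε * (q * ((q - 1) * c ^ (q - 1 - 1)) + -p * ((-p - 1) * c ^ (-p - 1 - 1)))) c :=
      hdvd.hasDerivAt.sub (hφ'd.const_mul ε)
    have heq : deriv w =ᶠ[𝓝 c]
        (fun x => deriv v x - ε * (q * x ^ (q - 1) + -p * x ^ (-p - 1))) := by
      filter_upwards [hIoi_nhds] with x hx
      exact (hw' x hx).deriv
    have hwd2 : deriv (deriv w) c =
        deriv (deriv v) c -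
          ε * (q * ((q - 1) * c ^ (q - 1 - 1)) + -p * ((-p - 1) * c ^ (-p - 1 - 1))) := by
      rw [heq.deriv_eq]
      exact hgd.deriv
    have hD2 : deriv (deriv w) c ≤ 0 := by
      apply deriv2_nonpos_of_isLocalMax hlocmax
      · filter_upwards [hIoi_nhds] with x hx
        exact (hw' x hx).differentiableAt
      · rw [(Filter.EventuallyEq.differentiableAt_iff heq)]
        exact hgd.differentiableAt
    -- algebraic contradiction
    have hsubc := hsub c (mem_Ioi.mpr hc0)
    set A : ℝ := c ^ q with hA
    set B : ℝ := c ^ (-p) with hB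
    have hApos : 0 < A := Real.rpow_pos_of_pos hc0 q
    have hBpos : 0 < B := Real.rpow_pos_of_pos hc0 (-p)
    have e1 : c ^ (q - 1) * c = A := by
      rw [hA, ← Real.rpow_add_one hc0.ne' (q - 1)]
      congr 1
      ring
    have e2 : c ^ (q - 1 - 1) * c ^ 2 = A := by
      rw [hA, show (c : ℝ) ^ (2 : ℕ) = c * c by ring, ← mul_assoc,
        ← Real.rpow_add_one hc0.ne', ← Real.rpow_add_one hc0.ne']
      congr 1
      ring
    have e3 : c ^ (-p - 1) * c = B := by
      rw [hB, ← Real.rpow_add_one hc0.ne' (-p - 1)]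
      congr 1
      ring
    have e4 : c ^ (-p - 1 - 1) * c ^ 2 = B := by
      rw [hB, show (c : ℝ) ^ (2 : ℕ) = c * c by ring, ← mul_assoc,
        ← Real.rpow_add_one hc0.ne', ← Real.rpow_add_one hc0.ne']
      congr 1
      ring
    -- from deriv w c = 0:
    have hDv : deriv v c = ε * (q * c ^ (q - 1) + -p * c ^ (-p - 1)) := by
      rw [hwd1] at hderiv0; linarith
    -- from second derivative ≤ 0:
    have hDvv : deriv (deriv v) c ≤
        ε * (q * ((q - 1) * c ^ (q - 1 - 1)) + -p * ((-p - 1) * c ^ (-p - 1 - 1))) := by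
      rw [hwd2] at hD2; linarith
    have hwcpos : 0 < v c - ε * (A + B + 1) := hpos
    -- multiply second derivative bound by (1/2)σ²c² ≥ 0
    have hc2 : (0:ℝ) ≤ 1 / 2 * σ ^ 2 * c ^ 2 := by positivity
    have hmul : 1 / 2 * σ ^ 2 * c ^ 2 * deriv (deriv v) c ≤
        1 / 2 * σ ^ 2 * c ^ 2 *
          (ε * (q * ((q - 1) * c ^ (q - 1 - 1)) + -p * ((-p - 1) * c ^ (-p - 1 - 1)))) :=
      mul_le_mul_of_nonneg_left hDvv hc2
    have hexpand : 1 / 2 * σ ^ 2 * c ^ 2 *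
          (ε * (q * ((q - 1) * c ^ (q - 1 - 1)) + -p * ((-p - 1) * c ^ (-p - 1 - 1))))
        + b * c * (ε * (q * c ^ (q - 1) + -p * c ^ (-p - 1)))
        = ε * ((σ ^ 2 / 2 * (q * (q - 1)) + b * q) * A
            + (σ ^ 2 / 2 * (p * (p + 1)) - b * p) * B) := by
      linear_combination (ε * (σ ^ 2 / 2) * (q * (q - 1))) * e2
        + (ε * (σ ^ 2 / 2) * (p * (p + 1))) * e4
        + (ε * b * q) * e1 - (ε * b * p) * e3
    -- combine
    have hfinal : a₁ * v c ≤ ε * ((σ ^ 2 / 2 * (q * (q - 1)) + b * q) * A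
        + (σ ^ 2 / 2 * (p * (p + 1)) - b * p) * B) := by
      rw [hDv] at hsubc
      linarith [hmul, hexpand.le, hexpand.ge]
    have hlow : ε * (a₁ * (A + B + 1)) < a₁ * v c := by
      linarith [mul_pos ha₁ hwcpos]
    linarith [mul_pos (mul_pos hε hψq) hApos, mul_pos (mul_pos hε hψp) hBpos,
      mul_pos hε ha₁]
  -- conclude by letting ε → 0
  intro x hx
  rw [mem_Ioi] at hx
  by_contra hvx
  push_neg at hvx
  set M : ℝ := x ^ q + x ^ (-p) + 1 with hM
  have hM0 : 0 < M := by
    have h1 : 0 < x ^ q := Real.rpow_pos_of_pos hx q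
    have h2 : 0 < x ^ (-p) := Real.rpow_pos_of_pos hx (-p)
    simp only [hM]; linarith
  have := key (v x / (2 * M)) (by positivity) x (mem_Ioi.mpr hx)
  rw [← hM] at this
  have : v x ≤ v x / 2 := by
    calc v x ≤ v x / (2 * M) * M := this
      _ = v x / 2 := by field_simp
  linarith
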